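/- Let P be a convex set containing the origin and eight consecutive lattice points at height -1, all of whose lattice points are visible from the origin. Then P contains no lattice point (x,y) with y ≥ 2. -/

import Mathlib

/-- If `P` is a convex set containing the origin whose lattice points are all visible from
the origin, and `P` contains 8 consecutive lattice points at height `-1`, then `P` contains
no lattice point at height `≥ 2`. -/
theorem no_lattice_point_height_ge_two (P : Set (ℝ × ℝ)) (hconv : Convex ℝ P)
    (h0 : ((0 : ℝ), (0 : ℝ)) ∈ P)
    (hvis : ∀ x y : ℤ, ((x : ℝ), (y : ℝ)) ∈ P → (x = 0 ∧ y = 0) ∨ Int.gcd x y = 1)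
    (a : ℤ)
    (height : ∀ i : ℤ, 0 ≤ i → i ≤ 7 → (((a : ℝ) + (i : ℝ)), (-1 : ℝ)) ∈ P) :
    ∀ x y : ℤ, ((x : ℝ), (y : ℝ)) ∈ P → y < 2 := by
  intro x y hmem
  by_contra hy
  push_neg at hy
  have hy2 : (2:ℝ) ≤ (y:ℝ) := by exact_mod_cast hy
  have hyp : (0:ℝ) < (y:ℝ) + 1 := by linarith
  set t : ℝ := 1/((y:ℝ)+1) with ht
  have ht0 : 0 ≤ t := by positivity
  have ht1 : (1:ℝ) - t = (y:ℝ)/((y:ℝ)+1) := by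
    rw [ht]; field_simp; ring
  have ht1' : 0 ≤ (1:ℝ) - t := by
    rw [ht1]; positivity
  set c : ℝ := (1-t) * (a:ℝ) + t * (x:ℝ) with hc
  -- the intersection points at height 0
  have hp : ∀ i : ℤ, 0 ≤ i → i ≤ 7 → ((c + (1-t) * (i:ℝ), (0:ℝ)) : ℝ × ℝ) ∈ P := by
    intro i h0i h7i
    have hcomb := hconv (height i h0i h7i) hmem ht1' ht0 (by ring)
    have heq : (1-t) • (((a:ℝ) + (i:ℝ)), (-1:ℝ)) + t • ((x:ℝ), (y:ℝ))
        = ((c + (1-t) * (i:ℝ), (0:ℝ)) : ℝ × ℝ) := by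
      rw [Prod.ext_iff]
      constructor
      · simp [Prod.smul_def, hc]; ring
      · simp [Prod.smul_def, ht]
        field_simp; ring
    rwa [heq] at hcomb
  set d : ℝ := 7 * (1 - t) with hd
  have hd4 : (4:ℝ) < d := by
    rw [hd, ht1, ← mul_div_assoc, lt_div_iff₀ hyp]
    linarith
  -- every real point (u,0) with c ≤ u ≤ c + d lies in P
  have hseg : ∀ u : ℝ, c ≤ u → u ≤ c + d → ((u, (0:ℝ)) : ℝ × ℝ) ∈ P := by
    intro u hu1 hu2
    have hdpos : 0 < d := by linarith
    set s : ℝ := (u - c)/d with hs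
    have hs0 : 0 ≤ s := by
      apply div_nonneg (by linarith) hdpos.le
    have hs1 : s ≤ 1 := by
      rw [hs, div_le_one hdpos]; linarith
    have hP0 := hp 0 le_rfl (by norm_num)
    have hP7 := hp 7 (by norm_num) le_rfl
    simp only [Int.cast_zero, mul_zero, add_zero, Int.cast_ofNat] at hP0
    have hP7' : ((c + d, (0:ℝ)) : ℝ × ℝ) ∈ P := by
      convert hP7 using 2
      rw [hd]; push_cast; ring
    have hcomb := hconv hP0 hP7' (by linarith : (0:ℝ) ≤ 1 - s) hs0 (by ring)
    have heq : (1-s) • ((c, (0:ℝ)) : ℝ × ℝ) + s • ((c + d, (0:ℝ)) : ℝ × ℝ)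
        = ((u, (0:ℝ)) : ℝ × ℝ) := by
      rw [Prod.ext_iff]
      constructor
      · simp [Prod.smul_def]
        have : s * d = u - c := by
          rw [hs, div_mul_cancel₀]; exact ne_of_gt hdpos
        nlinarith [this]
      · simp [Prod.smul_def]
    rwa [heq] at hcomb
  -- four consecutive integers in [c, c+d]
  set m : ℤ := ⌈c⌉ with hm
  have hmc : c ≤ (m:ℝ) := Int.le_ceil c
  have hmc' : (m:ℝ) < c + 1 := Int.ceil_lt_add_one c
  have key : ∀ k : ℤ, 0 ≤ k → k ≤ 3 → m + k = 0 ∨ (m + k).natAbs = 1 := by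
    intro k h0k h3k
    have hk : ((m:ℝ) + (k:ℝ)) ≤ c + d := by
      have : ((k:ℝ)) ≤ 3 := by exact_mod_cast h3k
      linarith
    have hk' : c ≤ (m:ℝ) + (k:ℝ) := by
      have : (0:ℝ) ≤ (k:ℝ) := by exact_mod_cast h0k
      linarith
    have hmemk := hseg ((m:ℝ) + (k:ℝ)) hk' hk
    have hcast : (((m + k : ℤ) : ℝ), ((0:ℤ) : ℝ)) ∈ P := by
      push_cast; exact hmemk
    rcases hvis (m+k) 0 hcast with ⟨h1, _⟩ | h2
    · exact Or.inl h1
    · right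
      simpa [Int.gcd] using h2
  have k0 := key 0 (by norm_num) (by norm_num)
  have k1 := key 1 (by norm_num) (by norm_num)
  have k2 := key 2 (by norm_num) (by norm_num)
  have k3 := key 3 (by norm_num) (by norm_num)
  omega
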